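/- arXiv:1212.1098 — 5 statements merged into one kernel-verified Lean document; each statement's English description precedes it below -/
import Mathlib

section
/- For any ρ ≥ 0 and ε ∈ [0,1/2], the function f(ε) = (ε^(1/(1+ρ)) + (1-ε)^(1/(1+ρ)))^(1+ρ) is non-decreasing in ε. -/
/-- For any ρ ≥ 0, the function f(ε) = (ε^(1/(1+ρ)) + (1-ε)^(1/(1+ρ)))^(1+ρ)
is non-decreasing in ε on [0, 1/2]. -/
theorem fbsc_monotone (ρ : ℝ) (hρ : 0 ≤ ρ) :
    MonotoneOn (fun ε : ℝ => (ε ^ (1/(1+ρ)) + (1-ε) ^ (1/(1+ρ))) ^ (1+ρ))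
      (Set.Icc (0:ℝ) (1/2)) := by
  set a : ℝ := 1/(1+ρ) with ha_def
  have hρ1 : (0:ℝ) < 1 + ρ := by linarith
  have ha0 : 0 < a := by positivity
  have ha1 : a ≤ 1 := by
    rw [ha_def, div_le_one hρ1]; linarith
  have C : ConcaveOn ℝ (Set.Ici (0:ℝ)) (fun x : ℝ => x ^ a) :=
    Real.concaveOn_rpow ha0.le ha1
  -- concavity of g on [0,1]
  have hg : ConcaveOn ℝ (Set.Icc (0:ℝ) 1) (fun ε : ℝ => ε ^ a + (1-ε) ^ a) := by
    have h1 : ConcaveOn ℝ (Set.Icc (0:ℝ) 1) (fun ε : ℝ => ε ^ a) :=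
      C.subset (fun x hx => hx.1) (convex_Icc _ _)
    have h2 : ConcaveOn ℝ (Set.Icc (0:ℝ) 1) (fun ε : ℝ => (1-ε) ^ a) := by
      refine ⟨convex_Icc _ _, fun x hx y hy t s ht hs hts => ?_⟩
      have key := C.2 (Set.mem_Ici.2 (by linarith [hx.2] : (0:ℝ) ≤ 1 - x))
        (Set.mem_Ici.2 (by linarith [hy.2] : (0:ℝ) ≤ 1 - y)) ht hs hts
      simp only [smul_eq_mul] at key ⊢
      have : 1 - (t * x + s * y) = t * (1 - x) + s * (1 - y) := by ring_nf; linarith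
      rw [this]; exact key
    exact h1.add h2
  intro x hx y hy hxy
  have hgx0 : (0:ℝ) ≤ x ^ a + (1-x) ^ a := by
    have := Real.rpow_nonneg hx.1 a
    have := Real.rpow_nonneg (by linarith [hx.2] : (0:ℝ) ≤ 1 - x) a
    linarith
  refine Real.rpow_le_rpow hgx0 ?_ hρ1.le
  -- inner inequality
  rcases eq_or_lt_of_le hxy with rfl | hxy'
  · exact le_rfl
  rcases eq_or_lt_of_le hx.2 with hx2 | hx2
  · exfalso; linarith [hy.2]
  -- x < 1/2
  have hd : (0:ℝ) < 1 - 2*x := by linarith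
  set t : ℝ := (1 - x - y)/(1 - 2*x) with ht_def
  set s : ℝ := (y - x)/(1 - 2*x) with hs_def
  have ht : 0 ≤ t := div_nonneg (by linarith [hy.2]) hd.le
  have hs : 0 ≤ s := div_nonneg (by linarith) hd.le
  have hts : t + s = 1 := by
    rw [ht_def, hs_def, ← add_div, div_eq_one_iff_eq hd.ne']; ring
  have hcomb : t • x + s • (1-x) = y := by
    simp only [smul_eq_mul, ht_def, hs_def]
    rw [div_mul_eq_mul_div, div_mul_eq_mul_div, ← add_div, div_eq_iff hd.ne']
    ring
  have hx' : x ∈ Set.Icc (0:ℝ) 1 := ⟨hx.1, by linarith [hx.2]⟩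
  have h1x' : (1-x) ∈ Set.Icc (0:ℝ) 1 := ⟨by linarith [hx.2], by linarith [hx.1]⟩
  have key := hg.2 hx' h1x' ht hs hts
  rw [hcomb] at key
  simp only [smul_eq_mul, sub_sub_cancel] at key
  calc x ^ a + (1-x) ^ a = t * (x ^ a + (1-x) ^ a) + s * ((1-x) ^ a + x ^ a) := by
        rw [add_comm ((1-x)^a)]; rw [← add_mul, hts, one_mul]
    _ ≤ y ^ a + (1-y) ^ a := key
end

section
/- For every ρ ≥ 0, the function f(ε) = (ε^(1/(1+ρ)) + (1-ε)^(1/(1+ρ)))^(1+ρ) is concave on [0,1/2]. -/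
open Real

/-- Superadditivity of `(x,y) ↦ (x^q + y^q)^s` with `q*s = 1`, `s ≥ 1`
(reverse Minkowski in two variables), derived from Minkowski's inequality. -/
lemma fbsc_superadd {q s : ℝ} (hs : 1 ≤ s) (hqs : q * s = 1)
    {x1 y1 x2 y2 : ℝ} (hx1 : 0 ≤ x1) (hy1 : 0 ≤ y1) (hx2 : 0 ≤ x2) (hy2 : 0 ≤ y2) :
    (x1 ^ q + y1 ^ q) ^ s + (x2 ^ q + y2 ^ q) ^ s ≤
      ((x1 + x2) ^ q + (y1 + y2) ^ q) ^ s := by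
  have hs0 : (0:ℝ) < s := lt_of_lt_of_le one_pos hs
  have hq : q = 1 / s := by field_simp; linarith [hqs]
  have key := Real.Lp_add_le_of_nonneg (s := (Finset.univ : Finset (Fin 2)))
    (f := ![x1 ^ q, x2 ^ q]) (g := ![y1 ^ q, y2 ^ q]) (p := s) hs
    (by intro i _; fin_cases i
        · simpa using Real.rpow_nonneg hx1 q
        · simpa using Real.rpow_nonneg hx2 q)
    (by intro i _; fin_cases i
        · simpa using Real.rpow_nonneg hy1 q
        · simpa using Real.rpow_nonneg hy2 q)
  simp only [Fin.sum_univ_two, Matrix.cons_val_zero, Matrix.cons_val_one, Matrix.head_cons] at key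
  have e : ∀ x : ℝ, 0 ≤ x → (x ^ q) ^ s = x := by
    intro x hx
    rw [← Real.rpow_mul hx, hqs, Real.rpow_one]
  rw [e _ hx1, e _ hx2, e _ hy1, e _ hy2, ← hq] at key
  have lhs_nonneg : 0 ≤ (x1 ^ q + y1 ^ q) ^ s + (x2 ^ q + y2 ^ q) ^ s := by positivity
  have key2 := Real.rpow_le_rpow (by positivity) key hs0.le
  rwa [← Real.rpow_mul lhs_nonneg, hqs, Real.rpow_one] at key2

/-- Homogeneity: `((c*x)^q + (c*y)^q)^s = c * (x^q + y^q)^s` when `q*s = 1`. -/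
lemma fbsc_homog {q s : ℝ} (hq0 : 0 ≤ q) (hqs : q * s = 1)
    {c x y : ℝ} (hc : 0 ≤ c) (hx : 0 ≤ x) (hy : 0 ≤ y) :
    ((c * x) ^ q + (c * y) ^ q) ^ s = c * (x ^ q + y ^ q) ^ s := by
  rw [Real.mul_rpow hc hx, Real.mul_rpow hc hy, ← mul_add,
    Real.mul_rpow (Real.rpow_nonneg hc q) (by positivity),
    ← Real.rpow_mul hc, hqs, Real.rpow_one]

/-- For ρ ≥ 0, f(ε) = (ε^(1/(1+ρ)) + (1-ε)^(1/(1+ρ)))^(1+ρ) is concave on [0,1/2]. -/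
theorem fbsc_concave (ρ : ℝ) (hρ : 0 ≤ ρ) :
    ConcaveOn ℝ (Set.Icc (0:ℝ) (1/2))
      (fun ε : ℝ => (ε ^ (1/(1+ρ)) + (1-ε) ^ (1/(1+ρ))) ^ (1+ρ)) := by
  set q : ℝ := 1 / (1 + ρ) with hqdef
  set s : ℝ := 1 + ρ with hsdef
  have hs : (1:ℝ) ≤ s := by simp [hsdef]; linarith
  have hs0 : (0:ℝ) < s := lt_of_lt_of_le one_pos hs
  have hqs : q * s = 1 := by rw [hqdef]; exact one_div_mul_cancel hs0.ne'
  have hq0 : (0:ℝ) ≤ q := by positivity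
  refine ⟨convex_Icc _ _, ?_⟩
  intro x hx y hy a b ha hb hab
  obtain ⟨hx0, hx1⟩ := hx
  obtain ⟨hy0, hy1⟩ := hy
  have hx1' : 0 ≤ 1 - x := by linarith
  have hy1' : 0 ≤ 1 - y := by linarith
  simp only [smul_eq_mul]
  have hcompl : a * (1 - x) + b * (1 - y) = 1 - (a * x + b * y) := by
    have hb' : b = 1 - a := by linarith
    rw [hb']; ring
  calc a * (x ^ q + (1-x) ^ q) ^ s + b * (y ^ q + (1-y) ^ q) ^ s
      = ((a*x) ^ q + (a*(1-x)) ^ q) ^ s + ((b*y) ^ q + (b*(1-y)) ^ q) ^ s := by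
        rw [fbsc_homog hq0 hqs ha hx0 hx1', fbsc_homog hq0 hqs hb hy0 hy1']
    _ ≤ ((a*x + b*y) ^ q + (a*(1-x) + b*(1-y)) ^ q) ^ s :=
        fbsc_superadd hs hqs (by positivity) (by positivity) (by positivity) (by positivity)
    _ = ((a*x + b*y) ^ q + (1 - (a*x + b*y)) ^ q) ^ s := by rw [hcompl]
end

section
/- For all z ∈ (0,1) and all ρ > -1, the quantity g(z,ρ) = ρ/(1+ρ) + (1 - z + z^(1/(1+ρ)) - z^(ρ/(1+ρ))) / ((1+z) ln z) is non-negative. -/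
open Real Set

/-- For `x ≥ 1`, `2(x-1)/(x+1) ≤ log x`. -/
lemma lemA (x : ℝ) (hx : 1 ≤ x) : 2*(x-1)/(x+1) ≤ Real.log x := by
  set f : ℝ → ℝ := fun y => Real.log y - 2*(y-1)/(y+1) with hf
  have hmono : MonotoneOn f (Set.Ici 1) := by
    apply monotoneOn_of_hasDerivWithinAt_nonneg (convex_Ici 1)
      (f' := fun y => 1/y - 4/(y+1)^2)
    · intro y hy
      have hy0 : (0:ℝ) < y := lt_of_lt_of_le one_pos hy
      have hne : y + 1 ≠ 0 := by positivity
      exact ((Real.continuousAt_log hy0.ne').sub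
        (((continuous_const.mul (continuous_id.sub continuous_const)).continuousAt).div
          ((continuous_id.add continuous_const).continuousAt) hne)).continuousWithinAt
    · intro y hy
      rw [interior_Ici] at hy
      have hy1 : (1:ℝ) < y := hy
      have hy0 : (0:ℝ) < y := by linarith
      have hne : y + 1 ≠ 0 := by positivity
      have h1 : HasDerivAt Real.log (1/y) y := by
        simpa [one_div] using Real.hasDerivAt_log hy0.ne'
      have h2 : HasDerivAt (fun y : ℝ => 2*(y-1)/(y+1))
          ((2*1*(y+1) - (2*(y-1))*1)/(y+1)^2) y := by
        exact (((hasDerivAt_id y).sub_const 1).const_mul 2).div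
          ((hasDerivAt_id y).add_const 1) hne
      have h3 : (2*1*(y+1) - (2*(y-1))*1)/(y+1)^2 = 4/(y+1)^2 := by ring_nf
      rw [h3] at h2
      exact ((h1.sub h2).hasDerivWithinAt)
    · intro y hy
      rw [interior_Ici] at hy
      have hy1 : (1:ℝ) < y := hy
      have hy0 : (0:ℝ) < y := by linarith
      rw [sub_nonneg, div_le_div_iff₀ (by positivity) hy0]
      nlinarith [sq_nonneg (y-1)]
  have h0 : f 1 ≤ f x := hmono (by simp) hx hx
  simp only [hf, Real.log_one] at h0
  norm_num at h0
  linarith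

/-- For `t ≥ 1`, `2 log t ≤ t - 1/t`. -/
lemma lemB (t : ℝ) (ht : 1 ≤ t) : 2 * Real.log t ≤ t - 1/t := by
  set f : ℝ → ℝ := fun y => y - 1/y - 2 * Real.log y with hf
  have hmono : MonotoneOn f (Set.Ici 1) := by
    apply monotoneOn_of_hasDerivWithinAt_nonneg (convex_Ici 1)
      (f' := fun y => 1 + 1/y^2 - 2/y)
    · intro y hy
      have hy0 : (0:ℝ) < y := lt_of_lt_of_le one_pos hy
      exact ((continuous_id.continuousAt.sub
        (continuous_const.continuousAt.div continuous_id.continuousAt hy0.ne')).sub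
        ((Real.continuousAt_log hy0.ne').const_smul (2:ℝ))).continuousWithinAt
    · intro y hy
      rw [interior_Ici] at hy
      have hy1 : (1:ℝ) < y := Set.mem_Ioi.mp hy
      have hy0 : (0:ℝ) < y := by linarith
      have h1 : HasDerivAt (fun y : ℝ => 1/y) ((0*y - 1*1)/y^2) y := by
        exact (hasDerivAt_const y (1:ℝ)).div (hasDerivAt_id y) hy0.ne'
      have h2 : HasDerivAt f (1 - (0*y-1*1)/y^2 - 2 * (1/y)) y := by
        exact ((hasDerivAt_id y).sub h1).sub
          ((by simpa [one_div] using Real.hasDerivAt_log hy0.ne' : HasDerivAt Real.log (1/y) y).const_mul 2)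
      have h3 : 1 - (0*y-1*1)/y^2 - 2 * (1/y) = 1 + 1/y^2 - 2/y := by ring
      rw [h3] at h2
      exact h2.hasDerivWithinAt
    · intro y hy
      rw [interior_Ici] at hy
      have hy1 : (1:ℝ) < y := Set.mem_Ioi.mp hy
      have hy0 : (0:ℝ) < y := by linarith
      have : 1 + 1/y^2 - 2/y = (y-1)^2/y^2 := by field_simp; ring
      rw [this]
      positivity
  have h0 : f 1 ≤ f t := hmono (by simp) ht ht
  simp only [hf, Real.log_one] at h0
  rw [one_div] at *
  norm_num at h0
  linarith

/-- Core inequality: `(1+ab) log b ≤ (1+a)(b-1)` for `0 < a ≤ 1`, `b > 0`, `ab ≤ 1`. -/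
lemma keyIneq (a b : ℝ) (ha0 : 0 < a) (ha1 : a ≤ 1) (hb0 : 0 < b) (hab : a*b ≤ 1) :
    (1 + a*b) * Real.log b ≤ (1+a) * (b-1) := by
  rcases le_or_gt b 1 with hb1 | hb1
  · -- b ≤ 1 : use log b ≤ 2(b-1)/(b+1), from lemA at 1/b
    have hA := lemA (1/b) (by rw [le_div_iff₀ hb0]; linarith)
    have hlogb : Real.log b ≤ 2*(b-1)/(b+1) := by
      rw [Real.log_div one_ne_zero hb0.ne', Real.log_one] at hA
      have he : 2*(1/b-1)/(1/b+1) = 2*(1-b)/(1+b) := by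
        rw [div_eq_div_iff (by positivity) (by positivity)]
        field_simp
      rw [he] at hA
      have : -(2*(1-b)/(1+b)) = 2*(b-1)/(b+1) := by ring_nf
      linarith [this ▸ (neg_le_neg hA)]
    have hpos : (0:ℝ) < 1 + a*b := by positivity
    calc (1 + a*b) * Real.log b ≤ (1 + a*b) * (2*(b-1)/(b+1)) := by
          exact mul_le_mul_of_nonneg_left hlogb hpos.le
      _ ≤ (1+a) * (b-1) := by
          rw [mul_div_assoc', div_le_iff₀ (by positivity : (0:ℝ) < b+1)]
          nlinarith [sq_nonneg (1-b)]
  · -- b > 1 : t = √b, use 2 log t ≤ t - 1/t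
    set t := Real.sqrt b with htdef
    have ht1 : 1 ≤ t := by
      rw [htdef, show (1:ℝ) = Real.sqrt 1 by simp]
      exact Real.sqrt_le_sqrt hb1.le
    have ht0 : 0 < t := lt_of_lt_of_le one_pos ht1
    have htsq : t^2 = b := Real.sq_sqrt hb0.le
    have hlog : Real.log b = 2 * Real.log t := by
      rw [htdef, Real.log_sqrt hb0.le]; ring
    have hB := lemB t ht1
    have hat : a * t ≤ 1 := by nlinarith
    have h1 : (1 + a*b) * Real.log b ≤ (1 + a*b) * (t - 1/t) := by
      apply mul_le_mul_of_nonneg_left _ (by positivity)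
      rw [hlog]; exact hB
    have h2 : (1 + a*b) * (t - 1/t) ≤ (1+a) * (b-1) := by
      have he : t - 1/t = (b-1)/t := by
        rw [← htsq]; field_simp
      rw [he, mul_div_assoc', div_le_iff₀ ht0]
      nlinarith [mul_nonneg (sub_nonneg.2 ht1) (sub_nonneg.2 hat)]
    linarith

/-- For z ∈ (0,1) and ρ > -1, g(z,ρ) ≥ 0. -/
theorem g_nonneg (z ρ : ℝ) (hz : z ∈ Set.Ioo (0:ℝ) 1) (hρ : -1 < ρ) :
    0 ≤ ρ/(1+ρ) + (1 - z + z ^ (1/(1+ρ)) - z ^ (ρ/(1+ρ))) / ((1+z) * Real.log z) := by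
  obtain ⟨hz0, hz1⟩ := hz
  have hρ1 : (0:ℝ) < 1 + ρ := by linarith
  set s : ℝ := 1/(1+ρ) with hs
  have hs0 : 0 < s := by positivity
  have hρs : ρ/(1+ρ) = 1 - s := by rw [hs]; field_simp; ring
  set a := z ^ s with hadef
  set b := z ^ (1-s) with hbdef
  have ha0 : 0 < a := Real.rpow_pos_of_pos hz0 s
  have hb0 : 0 < b := Real.rpow_pos_of_pos hz0 (1-s)
  have hab : a * b = z := by
    rw [hadef, hbdef, ← Real.rpow_add hz0]
    norm_num
  have ha1 : a ≤ 1 := Real.rpow_le_one hz0.le hz1.le hs0.le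
  have hlogb : Real.log b = (1-s) * Real.log z := Real.log_rpow hz0 _
  have hlz : Real.log z < 0 := Real.log_neg hz0 hz1
  have hD : (1+z) * Real.log z < 0 := mul_neg_of_pos_of_neg (by linarith) hlz
  have key := keyIneq a b ha0 ha1 hb0 (by rw [hab]; linarith)
  have hnum : (1-s) * ((1+z)*Real.log z) + (1 - z + a - b) ≤ 0 := by
    have h1 : (1-s) * ((1+z)*Real.log z) = (1+z) * Real.log b := by
      rw [hlogb]; ring
    rw [h1, ← hab]
    nlinarith [key]
  rw [hρs]
  have heq : (1-s) + (1 - z + a - b)/((1+z)*Real.log z)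
      = ((1-s)*((1+z)*Real.log z) + (1 - z + a - b)) / ((1+z)*Real.log z) := by
    rw [add_div, mul_div_assoc, div_self hD.ne, mul_one]
  rw [heq]
  exact div_nonneg_of_nonpos hnum hD.le
end

section
/- For all z ∈ (0,1), the function g₀(z,ρ) = 1 + z - z^(1/(1+ρ)) - z^(ρ/(1+ρ)) satisfies g₀(z,0) = 0, is non-decreasing in ρ on (-1,1], non-increasing in ρ on [1,∞), and tends to 0 as ρ → ∞. Consequently g₀(z,ρ) ≤ 0 for ρ ∈ (-1,0] and g₀(z,ρ) ≥ 0 for ρ ≥ 0. -/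
noncomputable def g0 (z ρ : ℝ) : ℝ := 1 + z - z ^ (1/(1+ρ)) - z ^ (ρ/(1+ρ))

open Real

lemma g0_exp_eq {ρ : ℝ} (h : (1:ℝ)+ρ ≠ 0) : ρ/(1+ρ) = 1 - 1/(1+ρ) := by
  field_simp
  ring

noncomputable def haux (z a : ℝ) : ℝ := 1 + z - z ^ a - z ^ (1-a)

lemma g0_eq_haux (z : ℝ) {ρ : ℝ} (h : (1:ℝ)+ρ ≠ 0) :
    g0 z ρ = haux z (1/(1+ρ)) := by
  unfold g0 haux
  rw [g0_exp_eq h]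

lemma haux_hasDerivAt {z : ℝ} (hz : 0 < z) (a : ℝ) :
    HasDerivAt (haux z) (Real.log z * (z ^ (1-a) - z ^ a)) a := by
  have h1 : HasDerivAt (fun a : ℝ => z ^ a) (z ^ a * Real.log z) a :=
    (Real.hasStrictDerivAt_const_rpow hz a).hasDerivAt
  have h2 : HasDerivAt (fun a : ℝ => z ^ (1-a)) (z ^ (1-a) * Real.log z * (-1)) a := by
    have := ((Real.hasStrictDerivAt_const_rpow hz (1-a)).hasDerivAt).comp a
      (((hasDerivAt_id a).const_sub 1))
    simpa [Function.comp_def] using this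
  have H := ((hasDerivAt_const a (1+z)).sub h1).sub h2
  have hval : Real.log z * (z ^ (1-a) - z ^ a)
      = 0 - z ^ a * Real.log z - z ^ (1-a) * Real.log z * (-1) := by ring
  rw [hval]
  exact H

lemma haux_anti {z : ℝ} (hz : z ∈ Set.Ioo (0:ℝ) 1) :
    AntitoneOn (haux z) (Set.Ici (1/2 : ℝ)) := by
  apply antitoneOn_of_deriv_nonpos (convex_Ici _)
  · exact fun a _ => (haux_hasDerivAt hz.1 a).continuousAt.continuousWithinAt
  · exact fun a _ => (haux_hasDerivAt hz.1 a).differentiableAt.differentiableWithinAt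
  · intro a ha
    rw [interior_Ici] at ha
    rw [(haux_hasDerivAt hz.1 a).deriv]
    apply mul_nonpos_of_nonpos_of_nonneg
    · exact (Real.log_nonpos hz.1.le hz.2.le)
    · have : z ^ a ≤ z ^ (1-a) := by
        apply Real.rpow_le_rpow_of_exponent_ge hz.1 hz.2.le
        linarith [(show (1/2:ℝ) < a from ha).le]
      linarith
  -- nothing

lemma haux_mono {z : ℝ} (hz : z ∈ Set.Ioo (0:ℝ) 1) :
    MonotoneOn (haux z) (Set.Iic (1/2 : ℝ)) := by
  apply monotoneOn_of_deriv_nonneg (convex_Iic _)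
  · exact fun a _ => (haux_hasDerivAt hz.1 a).continuousAt.continuousWithinAt
  · exact fun a _ => (haux_hasDerivAt hz.1 a).differentiableAt.differentiableWithinAt
  · intro a ha
    rw [interior_Iic] at ha
    rw [(haux_hasDerivAt hz.1 a).deriv]
    have hlog := Real.log_nonpos hz.1.le hz.2.le
    have : z ^ (1-a) ≤ z ^ a := by
      apply Real.rpow_le_rpow_of_exponent_ge hz.1 hz.2.le
      have ha' : a < 1/2 := ha
      linarith
    nlinarith

lemma g0_factor {z : ℝ} (hz : 0 < z) {ρ : ℝ} (h : (1:ℝ)+ρ ≠ 0) :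
    g0 z ρ = (1 - z ^ (1/(1+ρ))) * (1 - z ^ (ρ/(1+ρ))) := by
  have hsum : 1/(1+ρ) + ρ/(1+ρ) = 1 := by field_simp
  have : z ^ (1/(1+ρ)) * z ^ (ρ/(1+ρ)) = z := by
    rw [← Real.rpow_add hz, hsum, Real.rpow_one]
  unfold g0
  nlinarith [this]

/-- Properties of g₀(z,ρ) = 1 + z - z^(1/(1+ρ)) - z^(ρ/(1+ρ)) for z ∈ (0,1). -/
theorem g0_properties (z : ℝ) (hz : z ∈ Set.Ioo (0:ℝ) 1) :
    g0 z 0 = 0 ∧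
    MonotoneOn (g0 z) (Set.Ioc (-1:ℝ) 1) ∧
    AntitoneOn (g0 z) (Set.Ici (1:ℝ)) ∧
    Filter.Tendsto (g0 z) Filter.atTop (nhds 0) ∧
    (∀ ρ ∈ Set.Ioc (-1:ℝ) 0, g0 z ρ ≤ 0) ∧
    (∀ ρ : ℝ, 0 ≤ ρ → 0 ≤ g0 z ρ) := by
  obtain ⟨hz0, hz1⟩ := hz
  refine ⟨?_, ?_, ?_, ?_, ?_, ?_⟩
  · unfold g0; norm_num
  · -- monotone on (-1,1]
    intro ρ₁ h₁ ρ₂ h₂ hle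
    have hp1 : (0:ℝ) < 1 + ρ₁ := by linarith [h₁.1]
    have hp2 : (0:ℝ) < 1 + ρ₂ := by linarith [h₂.1]
    rw [g0_eq_haux z hp1.ne', g0_eq_haux z hp2.ne']
    apply haux_anti ⟨hz0, hz1⟩
    · rw [Set.mem_Ici, div_le_div_iff₀ (by norm_num : (0:ℝ) < 2) hp2]
      linarith [h₂.2]
    · rw [Set.mem_Ici, div_le_div_iff₀ (by norm_num : (0:ℝ) < 2) hp1]
      linarith [h₁.2]
    · exact one_div_le_one_div_of_le hp1 (by linarith)
  · -- antitone on [1,∞)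
    intro ρ₁ h₁ ρ₂ h₂ hle
    have h1' : (1:ℝ) ≤ ρ₁ := h₁
    have h2' : (1:ℝ) ≤ ρ₂ := h₂
    have hp1 : (0:ℝ) < 1 + ρ₁ := by linarith
    have hp2 : (0:ℝ) < 1 + ρ₂ := by linarith
    rw [g0_eq_haux z hp1.ne', g0_eq_haux z hp2.ne']
    apply haux_mono ⟨hz0, hz1⟩
    · rw [Set.mem_Iic, div_le_div_iff₀ hp2 (by norm_num)]
      linarith
    · rw [Set.mem_Iic, div_le_div_iff₀ hp1 (by norm_num)]
      linarith
    · exact one_div_le_one_div_of_le hp1 (by linarith)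
  · -- tendsto 0
    have hA : Filter.Tendsto (fun ρ : ℝ => 1/(1+ρ)) Filter.atTop (nhds 0) := by
      simp only [one_div]
      exact tendsto_inv_atTop_zero.comp
        (Filter.tendsto_atTop_add_const_left Filter.atTop 1 Filter.tendsto_id)
    have hB : Filter.Tendsto (fun ρ : ℝ => ρ/(1+ρ)) Filter.atTop (nhds 1) := by
      have : Filter.Tendsto (fun ρ : ℝ => 1 - 1/(1+ρ)) Filter.atTop (nhds (1 - 0)) :=
        (tendsto_const_nhds).sub hA
      rw [sub_zero] at this
      apply this.congr'
      filter_upwards [Filter.eventually_gt_atTop (0:ℝ)] with ρ hρ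
      exact (g0_exp_eq (by linarith)).symm
    have hC : ContinuousAt (fun t : ℝ => z ^ t) 0 := Real.continuousAt_const_rpow hz0.ne'
    have hD : ContinuousAt (fun t : ℝ => z ^ t) 1 := Real.continuousAt_const_rpow hz0.ne'
    have h1 : Filter.Tendsto (fun ρ : ℝ => z ^ (1/(1+ρ))) Filter.atTop (nhds 1) := by
      have := hC.tendsto.comp hA
      simpa [Real.rpow_zero, Function.comp_def] using this
    have h2 : Filter.Tendsto (fun ρ : ℝ => z ^ (ρ/(1+ρ))) Filter.atTop (nhds z) := by
      have := hD.tendsto.comp hB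
      simpa [Real.rpow_one, Function.comp_def] using this
    have : Filter.Tendsto (g0 z) Filter.atTop (nhds (1 + z - 1 - z)) :=
      ((tendsto_const_nhds.sub h1)).sub h2
    simpa using this
  · -- ≤ 0 on (-1,0]
    intro ρ hρ
    have hp : (0:ℝ) < 1 + ρ := by linarith [hρ.1]
    rw [g0_factor hz0 hp.ne']
    apply mul_nonpos_of_nonneg_of_nonpos
    · have : z ^ (1/(1+ρ)) ≤ 1 :=
        Real.rpow_le_one hz0.le hz1.le (by positivity)
      linarith
    · have : 1 ≤ z ^ (ρ/(1+ρ)) := by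
        apply Real.one_le_rpow_of_pos_of_le_one_of_nonpos hz0 hz1.le
        exact div_nonpos_of_nonpos_of_nonneg hρ.2 hp.le
      linarith
  · -- ≥ 0 on [0,∞)
    intro ρ hρ
    have hp : (0:ℝ) < 1 + ρ := by linarith
    rw [g0_factor hz0 hp.ne']
    apply mul_nonneg
    · have : z ^ (1/(1+ρ)) ≤ 1 :=
        Real.rpow_le_one hz0.le hz1.le (by positivity)
      linarith
    · have : z ^ (ρ/(1+ρ)) ≤ 1 :=
        Real.rpow_le_one hz0.le hz1.le (div_nonneg hρ hp.le)
      linarith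
end

section
/- Let X be uniformly distributed on a finite set 𝒳 and let Y have arbitrary (finite) alphabet, with joint law P_X P_{Y|X}. Define the information density i(x;y) = log₂(P_{Y|X}(y|x)/P_Y(y)) and I(X;Y) = E[i(X;Y)]. Then for every positive integer k, E[|i(X;Y) - I(X;Y)|^k] ≤ (2 log₂|𝒳| + (k/ln 2)(1 + |𝒳|^(1/k)))^k. -/
private lemma hpow_aux {k : ℕ} (hk : 0 < k) {a : ℝ} (ha : 0 ≤ a) :
    (a ^ ((1:ℝ)/(k:ℝ))) ^ k = a := by
  have hkne : (k:ℝ) ≠ 0 := Nat.cast_ne_zero.mpr hk.ne'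
  rw [← Real.rpow_natCast (a ^ ((1:ℝ)/(k:ℝ))) k, ← Real.rpow_mul ha, one_div,
    inv_mul_cancel₀ hkne, Real.rpow_one]

private lemma hpow_aux' {k : ℕ} (hk : 0 < k) {a : ℝ} (ha : 0 ≤ a) :
    (a ^ k) ^ ((1:ℝ)/(k:ℝ)) = a := by
  have hkne : (k:ℝ) ≠ 0 := Nat.cast_ne_zero.mpr hk.ne'
  rw [← Real.rpow_natCast a k, ← Real.rpow_mul ha, mul_one_div, div_self hkne, Real.rpow_one]

/-- Weighted Minkowski-type inequality: `E[(c + f)^k] ≤ (c·(Σw)^{1/k} + (E[f^k])^{1/k})^k`. -/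
private lemma weighted_minkowski {ι : Type*} [Fintype ι] (w f : ι → ℝ)
    (hw : ∀ i, 0 ≤ w i) (hf : ∀ i, 0 ≤ f i) (c : ℝ) (hc : 0 ≤ c)
    (k : ℕ) (hk : 0 < k) :
    ∑ i, w i * (c + f i) ^ k ≤
      (c * (∑ i, w i) ^ ((1:ℝ)/(k:ℝ)) + (∑ i, w i * f i ^ k) ^ ((1:ℝ)/(k:ℝ))) ^ k := by
  have hk1 : (1:ℝ) ≤ (k:ℝ) := by exact_mod_cast hk
  set F : ι → ℝ := fun i => w i ^ ((1:ℝ)/(k:ℝ)) * c with hF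
  set G : ι → ℝ := fun i => w i ^ ((1:ℝ)/(k:ℝ)) * f i with hG
  have hF0 : ∀ i, 0 ≤ F i := fun i => mul_nonneg (Real.rpow_nonneg (hw i) _) hc
  have hG0 : ∀ i, 0 ≤ G i := fun i => mul_nonneg (Real.rpow_nonneg (hw i) _) (hf i)
  have key := Real.Lp_add_le_of_nonneg (s := (Finset.univ : Finset ι)) (f := F) (g := G)
    (p := (k:ℝ)) hk1 (fun i _ => hF0 i) (fun i _ => hG0 i)
  have hrw : ∀ (a b : ℝ), 0 ≤ a → 0 ≤ b → (a * b) ^ ((k:ℝ)) = a ^ k * b ^ k := by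
    intro a b ha hb
    rw [Real.rpow_natCast, mul_pow]
  have e1 : ∀ i, (F i + G i) ^ ((k:ℝ)) = w i * (c + f i) ^ k := by
    intro i
    have : F i + G i = w i ^ ((1:ℝ)/(k:ℝ)) * (c + f i) := by simp [hF, hG]; ring
    rw [this, hrw _ _ (Real.rpow_nonneg (hw i) _) (add_nonneg hc (hf i)),
      hpow_aux hk (hw i)]
  have e2 : ∀ i, F i ^ ((k:ℝ)) = w i * c ^ k := by
    intro i
    rw [hF, hrw _ _ (Real.rpow_nonneg (hw i) _) hc, hpow_aux hk (hw i)]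
  have e3 : ∀ i, G i ^ ((k:ℝ)) = w i * f i ^ k := by
    intro i
    rw [hG, hrw _ _ (Real.rpow_nonneg (hw i) _) (hf i), hpow_aux hk (hw i)]
  simp only [e1, e2, e3] at key
  have hsumw : 0 ≤ ∑ i, w i := Finset.sum_nonneg fun i _ => hw i
  have e4 : (∑ i, w i * c ^ k) ^ ((1:ℝ)/(k:ℝ)) = c * (∑ i, w i) ^ ((1:ℝ)/(k:ℝ)) := by
    rw [← Finset.sum_mul, Real.mul_rpow hsumw (pow_nonneg hc k), hpow_aux' hk hc]
    ring
  rw [e4] at key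
  have hA : 0 ≤ ∑ i, w i * (c + f i) ^ k :=
    Finset.sum_nonneg fun i _ => mul_nonneg (hw i) (pow_nonneg (add_nonneg hc (hf i)) k)
  calc ∑ i, w i * (c + f i) ^ k
      = ((∑ i, w i * (c + f i) ^ k) ^ ((1:ℝ)/(k:ℝ))) ^ k := (hpow_aux hk hA).symm
    _ ≤ (c * (∑ i, w i) ^ ((1:ℝ)/(k:ℝ)) + (∑ i, w i * f i ^ k) ^ ((1:ℝ)/(k:ℝ))) ^ k := by
        apply pow_le_pow_left₀ (Real.rpow_nonneg hA _) key

/-- Bounded absolute central moments of the information density for a channel with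
uniform inputs on a finite alphabet. -/
theorem information_density_moment_bound {X Y : Type*} [Fintype X] [Fintype Y] [Nonempty X]
    (W : X → Y → ℝ) (hW : ∀ x y, 0 ≤ W x y) (hrow : ∀ x, ∑ y, W x y = 1)
    (k : ℕ) (hk : 0 < k) :
    (∑ x, ∑ y, (1 / (Fintype.card X : ℝ)) * W x y *
        |Real.logb 2 (W x y / (∑ x', (1 / (Fintype.card X : ℝ)) * W x' y))
          - ∑ x'', ∑ y', (1 / (Fintype.card X : ℝ)) * W x'' y' *
              Real.logb 2 (W x'' y' / (∑ x', (1 / (Fintype.card X : ℝ)) * W x' y'))| ^ k)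
      ≤ (2 * Real.logb 2 (Fintype.card X)
          + ((k : ℝ) / Real.log 2) * (1 + (Fintype.card X : ℝ) ^ ((1:ℝ)/(k:ℝ)))) ^ k := by
  classical
  set n : ℝ := (Fintype.card X : ℝ) with hn_def
  have hn1 : (1:ℝ) ≤ n := by
    rw [hn_def]
    exact_mod_cast Fintype.card_pos (α := X)
  have hn0 : (0:ℝ) < n := lt_of_lt_of_le zero_lt_one hn1
  have hlog2 : (0:ℝ) < Real.log 2 := Real.log_pos one_lt_two
  -- output distribution
  set PY : Y → ℝ := fun y => ∑ x', (1/n) * W x' y with hPY_def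
  have hPY0 : ∀ y, 0 ≤ PY y :=
    fun y => Finset.sum_nonneg fun x _ => mul_nonneg (by positivity) (hW x y)
  have hPYge : ∀ x y, (1/n) * W x y ≤ PY y := fun x y =>
    Finset.single_le_sum (fun x' _ => mul_nonneg (by positivity) (hW x' y)) (Finset.mem_univ x)
  have hPYsum : ∑ y, PY y = 1 := by
    rw [Finset.sum_comm]
    have : ∀ x, ∑ y, (1/n) * W x y = 1/n := by
      intro x; rw [← Finset.mul_sum, hrow x, mul_one]
    calc ∑ x, ∑ y, (1/n) * W x y = ∑ x : X, 1/n := by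
          exact Finset.sum_congr rfl fun x _ => this x
      _ = 1 := by
          rw [Finset.sum_const, nsmul_eq_mul, Finset.card_univ, ← hn_def]
          field_simp
  have hwsum : ∑ x, ∑ y, (1/n) * W x y = 1 := by
    rw [Finset.sum_comm]
    exact hPYsum
  -- information density and mutual information
  set ii : X → Y → ℝ := fun x y => Real.logb 2 (W x y / PY y) with hii_def
  set I : ℝ := ∑ x'', ∑ y', (1/n) * W x'' y' * ii x'' y' with hI_def
  set L : ℝ := Real.logb 2 n with hL_def
  have hL0 : (0:ℝ) ≤ L := Real.logb_nonneg one_lt_two hn1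
  set g : X → Y → ℝ := fun x y => (1/Real.log 2) * max 0 (Real.log (PY y / W x y)) with hg_def
  have hg0 : ∀ x y, 0 ≤ g x y := fun x y =>
    mul_nonneg (by positivity) (le_max_left 0 _)
  -- pointwise bound on |i| when W x y > 0
  have habs : ∀ x y, 0 < W x y → |ii x y| ≤ L + g x y := by
    intro x y hxy
    have hPYpos : 0 < PY y := lt_of_lt_of_le (by positivity) (hPYge x y)
    rw [abs_le]
    constructor
    · have h1 : ii x y = -Real.logb 2 (PY y / W x y) := by
        rw [hii_def]
        simp only
        rw [← Real.logb_inv, inv_div]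
      have h2 : Real.logb 2 (PY y / W x y) ≤ g x y := by
        have hmax : Real.log (PY y / W x y) ≤ max 0 (Real.log (PY y / W x y)) :=
          le_max_right _ _
        have h4 := mul_le_mul_of_nonneg_right hmax (inv_pos.mpr hlog2).le
        have e : g x y = max 0 (Real.log (PY y / W x y)) * (Real.log 2)⁻¹ := by
          rw [hg_def]; ring
        rw [e, Real.logb, div_eq_mul_inv]
        exact h4
      have : -(L + g x y) ≤ -Real.logb 2 (PY y / W x y) := by
        have := h2
        nlinarith
      rw [h1]; linarith [h2, hL0]
    · have h3 : W x y / PY y ≤ n := by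
        rw [div_le_iff₀ hPYpos]
        have := hPYge x y
        calc W x y = n * ((1/n) * W x y) := by field_simp
          _ ≤ n * PY y := by gcongr
      have : ii x y ≤ L := by
        rw [hii_def, hL_def]
        simp only
        exact Real.logb_le_logb_of_le one_lt_two (by positivity) h3
      linarith [hg0 x y]
  -- moment bound for g
  have hmom : ∀ (m : ℕ), 0 < m → ∀ x y,
      (1/n) * W x y * g x y ^ m ≤ ((m:ℝ)/Real.log 2) ^ m * ((1/n) * PY y) := by
    intro m hm x y
    rcases eq_or_lt_of_le (hW x y) with h0 | hpos
    · rw [← h0]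
      have : (0:ℝ) ≤ ((m:ℝ)/Real.log 2) ^ m * ((1/n) * PY y) := by
        have := hPY0 y; positivity
      simpa using this
    · have hPYpos : 0 < PY y := lt_of_lt_of_le (by positivity) (hPYge x y)
      set t : ℝ := PY y / W x y with ht_def
      have htpos : 0 < t := by positivity
      rcases le_or_gt (Real.log t) 0 with hlt | hlt
      · have : g x y = 0 := by
          rw [hg_def]; simp only [← ht_def, max_eq_left hlt, mul_zero]
        rw [this, zero_pow hm.ne', mul_zero]
        have := hPY0 y; positivity
      · have hgt : g x y = Real.log t / Real.log 2 := by
          rw [hg_def]; simp only [← ht_def, max_eq_right hlt.le]; ring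
        have hlogle : Real.log t ≤ (m:ℝ) * t ^ ((1:ℝ)/(m:ℝ)) := by
          have hmne : (m:ℝ) ≠ 0 := Nat.cast_ne_zero.mpr hm.ne'
          have h1 : Real.log (t ^ ((1:ℝ)/(m:ℝ))) = ((1:ℝ)/(m:ℝ)) * Real.log t :=
            Real.log_rpow htpos _
          have h2 : Real.log (t ^ ((1:ℝ)/(m:ℝ))) ≤ t ^ ((1:ℝ)/(m:ℝ)) - 1 :=
            Real.log_le_sub_one_of_pos (Real.rpow_pos_of_pos htpos _)
          have h3 : ((1:ℝ)/(m:ℝ)) * Real.log t ≤ t ^ ((1:ℝ)/(m:ℝ)) := by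
            linarith [h2, h1.symm.le, (Real.rpow_pos_of_pos htpos ((1:ℝ)/(m:ℝ))).le]
          have hmpos : (0:ℝ) < (m:ℝ) := by exact_mod_cast hm
          calc Real.log t = (m:ℝ) * (((1:ℝ)/(m:ℝ)) * Real.log t) := by
                field_simp
            _ ≤ (m:ℝ) * t ^ ((1:ℝ)/(m:ℝ)) := mul_le_mul_of_nonneg_left h3 hmpos.le
        have hgle : g x y ≤ ((m:ℝ)/Real.log 2) * t ^ ((1:ℝ)/(m:ℝ)) := by
          rw [hgt, div_le_iff₀ hlog2]
          calc Real.log t ≤ (m:ℝ) * t ^ ((1:ℝ)/(m:ℝ)) := hlogle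
            _ = (m:ℝ)/Real.log 2 * t ^ ((1:ℝ)/(m:ℝ)) * Real.log 2 := by
                field_simp
        have hpowle : g x y ^ m ≤ ((m:ℝ)/Real.log 2) ^ m * t := by
          calc g x y ^ m ≤ (((m:ℝ)/Real.log 2) * t ^ ((1:ℝ)/(m:ℝ))) ^ m :=
                pow_le_pow_left₀ (hg0 x y) hgle m
            _ = ((m:ℝ)/Real.log 2) ^ m * (t ^ ((1:ℝ)/(m:ℝ))) ^ m := mul_pow _ _ m
            _ = ((m:ℝ)/Real.log 2) ^ m * t := by rw [hpow_aux hm htpos.le]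
        calc (1/n) * W x y * g x y ^ m
            ≤ (1/n) * W x y * (((m:ℝ)/Real.log 2) ^ m * t) := by
              apply mul_le_mul_of_nonneg_left hpowle (by positivity)
          _ = ((m:ℝ)/Real.log 2) ^ m * ((1/n) * PY y) := by
              rw [ht_def]; field_simp
  -- summed moment bound
  have hmomsum : ∀ (m : ℕ), 0 < m →
      ∑ x, ∑ y, (1/n) * W x y * g x y ^ m ≤ ((m:ℝ)/Real.log 2) ^ m := by
    intro m hm
    calc ∑ x, ∑ y, (1/n) * W x y * g x y ^ m
        ≤ ∑ x, ∑ y, ((m:ℝ)/Real.log 2) ^ m * ((1/n) * PY y) := by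
          apply Finset.sum_le_sum; intro x _
          apply Finset.sum_le_sum; intro y _
          exact hmom m hm x y
      _ = ∑ x : X, ((m:ℝ)/Real.log 2) ^ m * (1/n) * ∑ y, PY y := by
          refine Finset.sum_congr rfl fun x _ => ?_
          rw [Finset.mul_sum]
          refine Finset.sum_congr rfl fun y _ => by ring
      _ = ((m:ℝ)/Real.log 2) ^ m := by
          rw [hPYsum]
          rw [Finset.sum_const, nsmul_eq_mul, Finset.card_univ, ← hn_def]
          field_simp
  -- bound on |I|
  have hIbound : |I| ≤ L + 1/Real.log 2 := by
    have h1 : |I| ≤ ∑ x, ∑ y, (1/n) * W x y * |ii x y| := by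
      rw [hI_def]
      calc |∑ x, ∑ y, (1/n) * W x y * ii x y|
          ≤ ∑ x, |∑ y, (1/n) * W x y * ii x y| := Finset.abs_sum_le_sum_abs _ _
        _ ≤ ∑ x, ∑ y, |(1/n) * W x y * ii x y| := by
            apply Finset.sum_le_sum; intro x _; exact Finset.abs_sum_le_sum_abs _ _
        _ = ∑ x, ∑ y, (1/n) * W x y * |ii x y| := by
            apply Finset.sum_congr rfl; intro x _
            apply Finset.sum_congr rfl; intro y _
            rw [abs_mul, abs_of_nonneg (mul_nonneg (by positivity : (0:ℝ) ≤ 1/n) (hW x y))]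
    have h2 : ∑ x, ∑ y, (1/n) * W x y * |ii x y| ≤
        ∑ x, ∑ y, (1/n) * W x y * (L + g x y) := by
      apply Finset.sum_le_sum; intro x _
      apply Finset.sum_le_sum; intro y _
      rcases eq_or_lt_of_le (hW x y) with h0 | hpos
      · rw [← h0]; ring_nf; simp
      · exact mul_le_mul_of_nonneg_left (habs x y hpos) (by positivity)
    have h3 : ∑ x, ∑ y, (1/n) * W x y * (L + g x y) ≤ L + 1/Real.log 2 := by
      have e : ∑ x, ∑ y, (1/n) * W x y * (L + g x y)
          = L * (∑ x, ∑ y, (1/n) * W x y) + ∑ x, ∑ y, (1/n) * W x y * g x y := by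
        rw [Finset.mul_sum, ← Finset.sum_add_distrib]
        apply Finset.sum_congr rfl; intro x _
        rw [Finset.mul_sum, ← Finset.sum_add_distrib]
        apply Finset.sum_congr rfl; intro y _
        ring
      rw [e, hwsum, mul_one]
      have := hmomsum 1 one_pos
      simp only [pow_one, Nat.cast_one] at this
      have e2 : ∑ x, ∑ y, (1/n) * W x y * g x y
          = ∑ x, ∑ y, (1/n) * W x y * g x y ^ 1 := by simp
      linarith [e2 ▸ this]
    linarith
  -- pointwise bound with constant c
  set c : ℝ := 2 * L + 1/Real.log 2 with hc_def
  have hc0 : 0 ≤ c := by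
    rw [hc_def]
    have h1 : (0:ℝ) ≤ 1/Real.log 2 := div_nonneg zero_le_one hlog2.le
    linarith
  have hpt : ∀ x y, (1/n) * W x y * |ii x y - I| ^ k ≤ (1/n) * W x y * (c + g x y) ^ k := by
    intro x y
    rcases eq_or_lt_of_le (hW x y) with h0 | hpos
    · rw [← h0]; ring_nf; simp
    · apply mul_le_mul_of_nonneg_left _ (mul_nonneg (by positivity : (0:ℝ) ≤ 1/n) (hW x y))
      apply pow_le_pow_left₀ (abs_nonneg _)
      calc |ii x y - I| ≤ |ii x y| + |I| := abs_sub _ _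
        _ ≤ (L + g x y) + (L + 1/Real.log 2) := add_le_add (habs x y hpos) hIbound
        _ = c + g x y := by rw [hc_def]; ring
  -- apply Minkowski over pairs
  have hmink : ∑ x, ∑ y, (1/n) * W x y * (c + g x y) ^ k ≤ (c + (k:ℝ)/Real.log 2) ^ k := by
    have key := weighted_minkowski (ι := X × Y)
      (fun p => (1/n) * W p.1 p.2) (fun p => g p.1 p.2)
      (fun p => mul_nonneg (by positivity : (0:ℝ) ≤ 1/n) (hW p.1 p.2)) (fun p => hg0 p.1 p.2) c hc0 k hk
    rw [Fintype.sum_prod_type] at key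
    have e1 : ∑ p : X × Y, (1/n) * W p.1 p.2 = 1 := by
      rw [Fintype.sum_prod_type]; exact hwsum
    have e2 : ∑ p : X × Y, (1/n) * W p.1 p.2 * g p.1 p.2 ^ k ≤ ((k:ℝ)/Real.log 2) ^ k := by
      rw [Fintype.sum_prod_type]; exact hmomsum k hk
    rw [e1, Real.one_rpow, mul_one] at key
    have hkl : (0:ℝ) ≤ (k:ℝ)/Real.log 2 := div_nonneg (Nat.cast_nonneg k) hlog2.le
    have hsum0 : (0:ℝ) ≤ ∑ p : X × Y, (1/n) * W p.1 p.2 * g p.1 p.2 ^ k :=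
      Finset.sum_nonneg fun p _ =>
        mul_nonneg (mul_nonneg (by positivity) (hW p.1 p.2)) (pow_nonneg (hg0 p.1 p.2) k)
    refine key.trans ?_
    apply pow_le_pow_left₀ (add_nonneg hc0 (Real.rpow_nonneg hsum0 _))
    gcongr
    calc (∑ p : X × Y, (1/n) * W p.1 p.2 * g p.1 p.2 ^ k) ^ ((1:ℝ)/(k:ℝ))
        ≤ (((k:ℝ)/Real.log 2) ^ k) ^ ((1:ℝ)/(k:ℝ)) := by
          apply Real.rpow_le_rpow hsum0 e2 (by positivity)
      _ = (k:ℝ)/Real.log 2 := hpow_aux' hk hkl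
  -- final comparison
  have hfin : c + (k:ℝ)/Real.log 2 ≤ 2 * L + ((k:ℝ)/Real.log 2) * (1 + n ^ ((1:ℝ)/(k:ℝ))) := by
    rw [hc_def]
    have hk1 : (1:ℝ) ≤ (k:ℝ) := by exact_mod_cast hk
    have hnk : (1:ℝ) ≤ n ^ ((1:ℝ)/(k:ℝ)) := Real.one_le_rpow hn1 (by positivity)
    have hkn : (1:ℝ) ≤ (k:ℝ) * n ^ ((1:ℝ)/(k:ℝ)) := by nlinarith
    have h5 := mul_le_mul_of_nonneg_right hkn (inv_pos.mpr hlog2).le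
    have e1 : (1:ℝ)/Real.log 2 = 1 * (Real.log 2)⁻¹ := by ring
    have e2 : ((k:ℝ)/Real.log 2) * n ^ ((1:ℝ)/(k:ℝ))
        = (k:ℝ) * n ^ ((1:ℝ)/(k:ℝ)) * (Real.log 2)⁻¹ := by ring
    nlinarith [h5]
  calc (∑ x, ∑ y, (1/n) * W x y * |ii x y - I| ^ k)
      ≤ ∑ x, ∑ y, (1/n) * W x y * (c + g x y) ^ k := by
        apply Finset.sum_le_sum; intro x _
        apply Finset.sum_le_sum; intro y _
        exact hpt x y
    _ ≤ (c + (k:ℝ)/Real.log 2) ^ k := hmink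
    _ ≤ (2 * L + ((k:ℝ)/Real.log 2) * (1 + n ^ ((1:ℝ)/(k:ℝ)))) ^ k := by
        have hkl : (0:ℝ) ≤ (k:ℝ)/Real.log 2 := div_nonneg (Nat.cast_nonneg k) hlog2.le
        apply pow_le_pow_left₀ (add_nonneg hc0 hkl) hfin
end
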